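/- arXiv:1702.00132 — 2 statements merged into one kernel-verified Lean document; each statement's English description precedes it below -/
import Mathlib

section
/- For any permutation w and integers n ≥ k ≥ 1, the Schubert polynomial of 1^n × w with the variables x_{k+1}, x_{k+2}, … set to 0 equals the Stanley symmetric polynomial S_w(x_1, …, x_k) in k variables. -/
open Equiv MvPolynomial

/-- The simple transposition `sᵢ` interchanging `i` and `i + 1`. -/
def simpleT (i : ℕ) : Equiv.Perm ℕ := Equiv.swap i (i + 1)

/-- A permutation of the positive integers: it fixes `0` and all but finitely many values. -/
def IsPermOfPos (w : Equiv.Perm ℕ) : Prop :=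
  w 0 = 0 ∧ ∃ N, ∀ i, N < i → w i = i

/-- The Coxeter length of `w`, i.e. the number of inversions among positions `≥ 1`. -/
noncomputable def permLen (w : Equiv.Perm ℕ) : ℕ :=
  Set.ncard {p : ℕ × ℕ | 1 ≤ p.1 ∧ p.1 < p.2 ∧ w p.2 < w p.1}

/-- `ρ` is a reduced expression for `w`, recorded left-to-right as `(i_ℓ, …, i_1)`,
so that `w = s_{i_ℓ} ⋯ s_{i_1}` and the length of `ρ` is the Coxeter length of `w`. -/
def IsReducedWord (w : Equiv.Perm ℕ) (ρ : List ℕ) : Prop :=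
  (∀ i ∈ ρ, 1 ≤ i) ∧ (ρ.map simpleT).prod = w ∧ ρ.length = permLen w

/-- `α` is a `ρ`-compatible sequence.  Here, following the paper, the entries
of the reduced expression `ρ = (i_ℓ, …, i_1)` are indexed from the right,
i.e. `ρ_j = i_j`, so the conditions are stated for `ρ.reverse`. -/
def IsCompatible (ρ α : List ℕ) : Prop :=
  α.length = ρ.length ∧
  (∀ j, j < α.length → 1 ≤ α.getD j 0) ∧
  (∀ j, j + 1 < α.length → α.getD j 0 ≤ α.getD (j + 1) 0) ∧
  (∀ j, j + 1 < α.length →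
    ρ.reverse.getD j 0 < ρ.reverse.getD (j + 1) 0 → α.getD j 0 < α.getD (j + 1) 0) ∧
  (∀ j, j < α.length → α.getD j 0 ≤ ρ.reverse.getD j 0)

/-- The Schubert polynomial `𝔖_w`, as the generating function of compatible sequences. -/
noncomputable def SchubertPoly (w : Equiv.Perm ℕ) : MvPolynomial ℕ ℤ :=
  ∑ᶠ ρ ∈ {ρ : List ℕ | IsReducedWord w ρ},
    ∑ᶠ α ∈ {α : List ℕ | IsCompatible ρ α}, (α.map X).prod

/-- `flatten a` removes the zero parts of the weak composition `a`. -/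
def flat (a : List ℕ) : List ℕ := a.filter (· ≠ 0)

/-- `Refines β α` : the strong composition `α` is obtained from `β` by summing
consecutive (nonempty) blocks of parts. -/
def Refines (β α : List ℕ) : Prop :=
  ∃ L : List (List ℕ), (∀ l ∈ L, l ≠ []) ∧ L.flatten = β ∧ L.map List.sum = α

/-- The monomial `x_1^{b_1} ⋯ x_n^{b_n}` associated to a weak composition `b` of length `n`. -/
noncomputable def wcMonomial (b : List ℕ) : MvPolynomial ℕ ℤ :=
  ((List.range b.length).map fun j => X (j + 1) ^ b.getD j 0).prod

/-- `Dominates b a` : `b ≥ a`, i.e. `b_1 + ⋯ + b_k ≥ a_1 + ⋯ + a_k` for all `k`. -/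
def Dominates (b a : List ℕ) : Prop := ∀ k, (a.take k).sum ≤ (b.take k).sum

/-- The fundamental slide polynomial `𝔉_a` of a weak composition `a`. -/
noncomputable def fundSlide (a : List ℕ) : MvPolynomial ℕ ℤ :=
  ∑ᶠ b ∈ {b : List ℕ | b.length = a.length ∧ Dominates b a ∧ Refines (flat b) (flat a)},
    wcMonomial b

/-- The fundamental slide polynomial extended by `𝔉_∅ = 0` (`none` plays the role of `∅`). -/
noncomputable def fundSlideO : Option (List ℕ) → MvPolynomial ℕ ℤ
  | none => 0
  | some a => fundSlide a

/-- Gessel's fundamental quasisymmetric polynomial `F_α(x_1, …, x_k)`. -/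
noncomputable def fundQuasi (k : ℕ) (α : List ℕ) : MvPolynomial ℕ ℤ :=
  ∑ᶠ b ∈ {b : List ℕ | b.length = k ∧ Refines (flat b) α}, wcMonomial b

/-- The run decomposition of a word: the maximal increasing runs, leftmost first. -/
def runsOf (ρ : List ℕ) : List (List ℕ) := ρ.splitBy (· < ·)

/-- The strong descent composition `Des(ρ) = (|ρ^{(1)}|, …, |ρ^{(k)}|)`,
where `ρ^{(1)}` is the rightmost run. -/
def strongDes (ρ : List ℕ) : List ℕ := ((runsOf ρ).map List.length).reverse

/-- Helper computing, left-to-right, the pairs `(r_i, |ρ^{(i)}|)` of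
Definition 2.3: `r_k` is the first letter of the leftmost run, and each
subsequent `r_i = min(ρ^{(i)}_1, r_{i+1} - 1)` (computed in `ℤ`). -/
def desPairsAux : Option ℤ → List (List ℕ) → List (ℤ × ℕ)
  | _, [] => []
  | prev, run :: rest =>
    let r : ℤ :=
      match prev with
      | none => (run.headD 0 : ℤ)
      | some p => min ((run.headD 0 : ℤ)) (p - 1)
    (r, run.length) :: desPairsAux (some r) rest

/-- The weak descent composition `des(ρ)`: the weak composition of length `r_k`
with `des(ρ)_{r_i} = |ρ^{(i)}|` and all other parts `0`, provided all `r_i ≥ 1`;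
otherwise `none` (i.e. `des(ρ) = ∅` and `ρ` is virtual). -/
def weakDes (ρ : List ℕ) : Option (List ℕ) :=
  let ps := desPairsAux none (runsOf ρ)
  if ∀ q ∈ ps, 1 ≤ q.1 then
    some ((List.range ((ps.headD (0, 0)).1.toNat)).map fun j =>
      (((ps.find? fun q => q.1 == (j + 1 : ℤ)).map Prod.snd).getD 0))
  else none

/-- The Stanley symmetric polynomial `S_w(x_1, …, x_k)`. -/
noncomputable def StanleyPoly (k : ℕ) (w : Equiv.Perm ℕ) : MvPolynomial ℕ ℤ :=
  ∑ᶠ ρ ∈ {ρ : List ℕ | IsReducedWord w ρ}, fundQuasi k (strongDes ρ)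

/-- Set the variables `x_{k+1}, x_{k+2}, …` to zero. -/
noncomputable def truncVars (k : ℕ) : MvPolynomial ℕ ℤ →ₐ[ℤ] MvPolynomial ℕ ℤ :=
  aeval fun i => if i ≤ k then X i else 0

/-- Set the single variable `x_k` to zero. -/
noncomputable def setVarZero (k : ℕ) : MvPolynomial ℕ ℤ →ₐ[ℤ] MvPolynomial ℕ ℤ :=
  aeval fun i => if i = k then 0 else X i


/-! ### Section 1: prefix sums and refinement -/

def PSums (l : List ℕ) : Set ℕ := {t | ∃ m, (l.take m).sum = t}

lemma zero_mem_PSums (l : List ℕ) : 0 ∈ PSums l := ⟨0, rfl⟩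

lemma sum_mem_PSums (l : List ℕ) : l.sum ∈ PSums l := ⟨l.length, by simp⟩

lemma PSums_le {l : List ℕ} {t : ℕ} (h : t ∈ PSums l) : t ≤ l.sum := by
  obtain ⟨m, rfl⟩ := h
  calc (l.take m).sum ≤ (l.take m).sum + (l.drop m).sum := Nat.le_add_right _ _
    _ = l.sum := by rw [← List.sum_append, List.take_append_drop]

lemma mem_PSums_cons {c : ℕ} {l : List ℕ} {t : ℕ} :
    t ∈ PSums (c :: l) ↔ t = 0 ∨ ∃ s ∈ PSums l, t = c + s := by
  constructor
  · rintro ⟨m, rfl⟩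
    cases m with
    | zero => exact Or.inl rfl
    | succ m' => exact Or.inr ⟨(l.take m').sum, ⟨m', rfl⟩, by simp⟩
  · rintro (rfl | ⟨s, ⟨m, rfl⟩, rfl⟩)
    · exact zero_mem_PSums _
    · exact ⟨m + 1, by simp⟩

lemma PSums_filter_ne_zero (l : List ℕ) : PSums (l.filter (· ≠ 0)) = PSums l := by
  induction l with
  | nil => rfl
  | cons x l ih =>
    by_cases hx : x = 0
    · subst hx
      rw [List.filter_cons_of_neg (by simp)]
      ext t
      rw [ih, mem_PSums_cons]
      constructor
      · exact fun h => Or.inr ⟨t, h, by omega⟩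
      · rintro (rfl | ⟨s, hs, rfl⟩)
        · exact zero_mem_PSums _
        · simpa using hs
    · rw [List.filter_cons_of_pos (by simpa using hx)]
      ext t
      rw [mem_PSums_cons, mem_PSums_cons, ih]

lemma sum_filter_ne_zero (l : List ℕ) : (l.filter (· ≠ 0)).sum = l.sum := by
  induction l with
  | nil => rfl
  | cons x l ih =>
    by_cases hx : x = 0
    · subst hx
      rw [List.filter_cons_of_neg (by simp), ih]
      simp
    · rw [List.filter_cons_of_pos (by simpa using hx), List.sum_cons, List.sum_cons, ih]

lemma flat_sum (l : List ℕ) : (flat l).sum = l.sum := sum_filter_ne_zero l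

lemma PSums_flat (l : List ℕ) : PSums (flat l) = PSums l := PSums_filter_ne_zero l

lemma flat_pos {l : List ℕ} : ∀ x ∈ flat l, x ≠ 0 := by
  intro x hx
  have := List.of_mem_filter hx
  simpa using this

lemma refines_sum {β γ : List ℕ} (h : Refines β γ) : β.sum = γ.sum := by
  obtain ⟨L, -, rfl, rfl⟩ := h
  simp [List.sum_flatten]

lemma refines_PSums {β γ : List ℕ} (h : Refines β γ) : PSums γ ⊆ PSums β := by
  obtain ⟨L, -, rfl, rfl⟩ := h
  rintro t ⟨m, rfl⟩
  refine ⟨((L.take m).flatten).length, ?_⟩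
  rw [← List.map_take, ← List.sum_flatten]
  congr 1
  have : L.flatten = (L.take m).flatten ++ (L.drop m).flatten := by
    rw [← List.flatten_append, List.take_append_drop]
  rw [this, List.take_left']
  rfl

lemma sum_take_mono (l : List ℕ) : Monotone fun m => (l.take m).sum :=
  List.monotone_sum_take l

lemma refines_of : ∀ {γ β : List ℕ}, (∀ x ∈ β, x ≠ 0) → (∀ x ∈ γ, x ≠ 0) →
    β.sum = γ.sum → PSums γ ⊆ PSums β → Refines β γ := by
  intro γ
  induction γ with
  | nil =>
    intro β hβ _ hsum _
    have : β = [] := by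
      cases β with
      | nil => rfl
      | cons x l =>
        exfalso
        have hx := hβ x (by simp)
        simp at hsum
        omega
    subst this
    exact ⟨[], by simp, rfl, rfl⟩
  | cons g γ' ih =>
    intro β hβ hγ hsum hPS
    have hg : g ∈ PSums β := hPS ⟨1, by simp⟩
    obtain ⟨m₀, hm₀⟩ := hg
    set m := min m₀ β.length with hm
    have hmβ : (β.take m).sum = g := by
      rw [hm]
      rcases le_total m₀ β.length with h | h
      · rw [min_eq_left h]; exact hm₀
      · rw [min_eq_right h, ← hm₀, List.take_of_length_le h, List.take_of_length_le (le_refl _)]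
    have hmle : m ≤ β.length := min_le_right _ _
    have hg0 : g ≠ 0 := hγ g (by simp)
    -- the tail
    set β₂ := β.drop m with hβ₂
    have hsplit : β = β.take m ++ β₂ := (List.take_append_drop m β).symm
    have hsum₂ : β₂.sum = γ'.sum := by
      have : (β.take m).sum + β₂.sum = β.sum := by
        conv_rhs => rw [hsplit]
        simp
      simp only [List.sum_cons] at hsum
      omega
    have hPS₂ : PSums γ' ⊆ PSums β₂ := by
      rintro t ⟨m', rfl⟩
      rcases Nat.eq_zero_or_pos ((γ'.take m').sum) with h0 | hpos
      · rw [h0]; exact zero_mem_PSums _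
      have : g + (γ'.take m').sum ∈ PSums β := hPS ⟨m' + 1, by simp⟩
      obtain ⟨m₂, hm₂⟩ := this
      have hm₂m : m ≤ m₂ := by
        by_contra hlt
        push_neg at hlt
        have := sum_take_mono β (le_of_lt hlt)
        simp only at this
        omega
      refine ⟨m₂ - m, ?_⟩
      have : β.take m₂ = β.take m ++ (β.drop m).take (m₂ - m) := by
        rw [← List.take_add]
        congr 1
        omega
      rw [this, List.sum_append, ← hβ₂] at hm₂
      omega
    obtain ⟨L', hL'ne, hL'flat, hL'sum⟩ :=
      ih (fun x hx => hβ x (by rw [hsplit]; exact List.mem_append_right _ hx))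
        (fun x hx => hγ x (by simp [hx])) hsum₂ hPS₂
    refine ⟨β.take m :: L', ?_, ?_, ?_⟩
    · intro l hl
      rcases List.mem_cons.mp hl with rfl | hl
      · intro hnil
        rw [hnil] at hmβ
        simp only [List.sum_nil] at hmβ
        exact hg0 hmβ.symm
      · exact hL'ne l hl
    · simp only [List.flatten_cons, hL'flat]
      exact hsplit.symm
    · simp [hL'sum, hmβ]
/-! ### Section 2: splitBy structure -/

def msp (R : ℕ → ℕ → Bool) : ℕ → List ℕ → List ℕ × List (List ℕ)
  | ag, [] => ([ag], [])
  | ag, a :: as =>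
    let p := msp R a as
    if R ag a then (ag :: p.1, p.2) else ([ag], p.1 :: p.2)

lemma splitBy_loop_eq (R : ℕ → ℕ → Bool) :
    ∀ (l : List ℕ) (ag : ℕ) (g : List ℕ) (gs : List (List ℕ)),
      List.splitBy.loop R l ag g gs =
        gs.reverse ++ (g.reverse ++ (msp R ag l).1) :: (msp R ag l).2 := by
  intro l
  induction l with
  | nil =>
    intro ag g gs
    simp [List.splitBy.loop, msp]
  | cons a as ih =>
    intro ag g gs
    rw [List.splitBy.loop]
    rcases hR : R ag a with hv | hv
    · simp only [msp, hR]
      rw [ih]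
      simp [msp, hR]
    · simp only [msp, hR]
      rw [ih]
      simp [msp, hR]

lemma splitBy_cons (R : ℕ → ℕ → Bool) (a : ℕ) (l : List ℕ) :
    List.splitBy R (a :: l) = (msp R a l).1 :: (msp R a l).2 := by
  rw [List.splitBy, splitBy_loop_eq]
  simp

/-- The composition of run lengths, head first. -/
def runComp (R : ℕ → ℕ → Bool) (ag : ℕ) (l : List ℕ) : List ℕ :=
  (msp R ag l).1.length :: (msp R ag l).2.map List.length

lemma runComp_sum (R : ℕ → ℕ → Bool) (ag : ℕ) (l : List ℕ) :
    (runComp R ag l).sum = l.length + 1 := by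
  induction l generalizing ag with
  | nil => simp [runComp, msp]
  | cons a as ih =>
    have := ih a
    cases hR : R ag a <;>
      · simp only [runComp, msp, hR, if_true, if_false] at this ⊢
        simp at this ⊢
        omega

lemma runComp_pos (R : ℕ → ℕ → Bool) (ag : ℕ) (l : List ℕ) :
    ∀ c ∈ runComp R ag l, c ≠ 0 := by
  induction l generalizing ag with
  | nil => simp [runComp, msp]
  | cons a as ih =>
    intro c hc
    cases hR : R ag a
    · simp only [runComp, msp, hR, if_false, Bool.false_eq_true, if_neg] at hc
      rcases List.mem_cons.mp hc with rfl | hc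
      · simp
      · rcases List.mem_cons.mp hc with h1 | h1
        · have : ((msp R a as).1.length) = c := by rw [h1]
          exact this ▸ ih a _ (List.mem_cons.mpr (Or.inl rfl))
        · exact ih a c (List.mem_cons.mpr (Or.inr h1))
    · simp only [runComp, msp, hR, if_true] at hc
      rcases List.mem_cons.mp hc with rfl | hc
      · simp
      · exact ih a c (List.mem_cons.mpr (Or.inr hc))

lemma mem_PSums_cons_pos {c : ℕ} {l : List ℕ} {t : ℕ} (ht : 0 < t) :
    t ∈ PSums (c :: l) ↔ ∃ s ∈ PSums l, t = c + s := by
  rw [mem_PSums_cons]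
  constructor
  · rintro (rfl | h)
    · omega
    · exact h
  · exact Or.inr

lemma mem_PSums_runComp (R : ℕ → ℕ → Bool) :
    ∀ (l : List ℕ) (ag : ℕ) (t : ℕ), 0 < t → t < l.length + 1 →
      (t ∈ PSums (runComp R ag l) ↔ R ((ag :: l).getD (t-1) 0) ((ag :: l).getD t 0) = false) := by
  intro l
  induction l with
  | nil => intro ag t h1 h2; simp at h2; omega
  | cons a as ih =>
    intro ag t h1 h2
    cases hR : R ag a
    · -- R ag a = false : a new group starts
      have hrc : runComp R ag (a :: as) = 1 :: runComp R a as := by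
        simp [runComp, msp, hR]
      rw [hrc]
      rcases Nat.eq_or_lt_of_le h1 with h1' | h1'
      · obtain rfl : t = 1 := h1'.symm
        simp only [List.getD_cons_zero, List.getD_cons_succ, Nat.sub_self]
        constructor
        · intro _; exact hR
        · intro _; exact ⟨1, by simp⟩
      · obtain ⟨u, rfl⟩ : ∃ u, t = u + 2 := ⟨t - 2, by omega⟩
        have h2' : u + 1 < as.length + 1 := by simp at h2; omega
        have hiff : (u + 2 ∈ PSums (1 :: runComp R a as)) ↔ (u + 1 ∈ PSums (runComp R a as)) := by
          rw [mem_PSums_cons_pos (by omega)]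
          constructor
          · rintro ⟨s, hs, h⟩
            have : s = u + 1 := by omega
            exact this ▸ hs
          · intro h
            exact ⟨u + 1, h, by omega⟩
        rw [hiff]
        have := ih a (u+1) (by omega) h2'
        simpa using this
    · -- R ag a = true : group continues
      have hrc : runComp R ag (a :: as) =
          ((msp R a as).1.length + 1) :: (msp R a as).2.map List.length := by
        simp [runComp, msp, hR]
      have hc0 : (msp R a as).1.length ≠ 0 :=
        runComp_pos R a as _ (List.mem_cons.mpr (Or.inl rfl))
      rw [hrc]
      rcases Nat.eq_or_lt_of_le h1 with h1' | h1'
      · obtain rfl : t = 1 := h1'.symm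
        simp only [List.getD_cons_zero, List.getD_cons_succ, Nat.sub_self]
        constructor
        · intro hmem
          exfalso
          rw [mem_PSums_cons_pos (by omega)] at hmem
          obtain ⟨s, _, h⟩ := hmem
          omega
        · intro h
          rw [hR] at h
          simp at h
      · obtain ⟨u, rfl⟩ : ∃ u, t = u + 2 := ⟨t - 2, by omega⟩
        have h2' : u + 1 < as.length + 1 := by simp at h2; omega
        have hiff : (u + 2 ∈ PSums (((msp R a as).1.length + 1) :: (msp R a as).2.map List.length))
            ↔ (u + 1 ∈ PSums (runComp R a as)) := by
          rw [mem_PSums_cons_pos (by omega), runComp, mem_PSums_cons_pos (by omega)]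
          constructor
          · rintro ⟨s, hs, h⟩
            exact ⟨s, hs, by omega⟩
          · rintro ⟨s, hs, h⟩
            exact ⟨s, hs, by omega⟩
        rw [hiff]
        have := ih a (u+1) (by omega) h2'
        simpa using this
/-! ### Section 3: strongDes -/

lemma getD_reverse (l : List ℕ) (j : ℕ) (h : j < l.length) :
    l.reverse.getD j 0 = l.getD (l.length - 1 - j) 0 := by
  rw [List.getD_eq_getElem _ _ (by simpa using h), List.getD_eq_getElem _ _ (by omega)]
  exact List.getElem_reverse _

lemma chain'_getD {R : ℕ → ℕ → Prop} {l : List ℕ} (h : List.Chain' R l) (i : ℕ)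
    (hi : i + 1 < l.length) : R (l.getD i 0) (l.getD (i+1) 0) := by
  rw [List.getD_eq_getElem _ _ (by omega), List.getD_eq_getElem _ _ hi]
  have := List.isChain_iff_getElem.mp h i (by omega)
  simpa [List.get_eq_getElem] using this

lemma strongDes_nil : strongDes [] = [] := rfl

lemma strongDes_cons (a : ℕ) (l : List ℕ) :
    strongDes (a :: l) = (runComp (fun x y => decide (x < y)) a l).reverse := by
  unfold strongDes runsOf runComp
  rw [splitBy_cons]
  simp

lemma strongDes_sum (ρ : List ℕ) : (strongDes ρ).sum = ρ.length := by
  cases ρ with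
  | nil => rfl
  | cons a l =>
    rw [strongDes_cons, List.sum_reverse, runComp_sum]
    simp

lemma strongDes_pos (ρ : List ℕ) : ∀ c ∈ strongDes ρ, c ≠ 0 := by
  cases ρ with
  | nil => simp [strongDes_nil]
  | cons a l =>
    intro c hc
    rw [strongDes_cons, List.mem_reverse] at hc
    exact runComp_pos _ a l c hc

lemma PSums_append_singleton (A : List ℕ) (x : ℕ) {t : ℕ} :
    t ∈ PSums (A ++ [x]) ↔ t ∈ PSums A ∨ t = A.sum + x := by
  constructor
  · rintro ⟨m, rfl⟩
    rcases le_or_gt m A.length with h | h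
    · exact Or.inl ⟨m, by rw [List.take_append_of_le_length h]⟩
    · right
      rw [List.take_of_length_le (by simpa using h)]
      simp
  · rintro (⟨m, rfl⟩ | rfl)
    · refine ⟨min m A.length, ?_⟩
      rw [List.take_append_of_le_length (min_le_right _ _)]
      rcases le_total m A.length with h | h
      · rw [min_eq_left h]
      · rw [min_eq_right h, List.take_of_length_le h, List.take_of_length_le le_rfl]
    · exact ⟨A.length + 1, by rw [List.take_of_length_le (by simp)]; simp⟩

lemma mem_PSums_reverse {l : List ℕ} {t : ℕ} :
    t ∈ PSums l.reverse ↔ ∃ s ∈ PSums l, s + t = l.sum := by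
  induction l with
  | nil =>
    simp only [List.reverse_nil, List.sum_nil]
    constructor
    · intro h
      have h1 := PSums_le h
      simp only [List.sum_nil, Nat.le_zero] at h1
      exact ⟨0, zero_mem_PSums _, by omega⟩
    · rintro ⟨s, hs, h⟩
      have h1 := PSums_le hs
      simp only [List.sum_nil, Nat.le_zero] at h1
      have ht : t = 0 := by omega
      exact ht ▸ zero_mem_PSums _
  | cons x l ih =>
    rw [List.reverse_cons, PSums_append_singleton]
    constructor
    · rintro (h | rfl)
      · obtain ⟨s, hs, hsum⟩ := ih.mp h
        refine ⟨x + s, mem_PSums_cons.mpr (Or.inr ⟨s, hs, rfl⟩), ?_⟩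
        simp only [List.sum_cons]
        omega
      · refine ⟨0, zero_mem_PSums _, ?_⟩
        simp only [List.sum_cons, List.sum_reverse]
        omega
    · rintro ⟨s, hs, hsum⟩
      rw [mem_PSums_cons] at hs
      simp only [List.sum_cons] at hsum
      rcases hs with rfl | ⟨s', hs', rfl⟩
      · right
        rw [List.sum_reverse]
        omega
      · left
        exact ih.mpr ⟨s', hs', by omega⟩

lemma mem_PSums_strongDes {ρ : List ℕ} (hch : List.Chain' (· ≠ ·) ρ) {t : ℕ}
    (h0 : 0 < t) (ht : t < ρ.length) :
    t ∈ PSums (strongDes ρ) ↔ ρ.reverse.getD (t-1) 0 < ρ.reverse.getD t 0 := by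
  cases ρ with
  | nil => simp at ht
  | cons a l =>
    have hLl : (a :: l).length = l.length + 1 := by simp
    have htL : t < l.length + 1 := by omega
    rw [strongDes_cons, mem_PSums_reverse]
    have hsum : (runComp (fun x y => decide (x < y)) a l).sum = l.length + 1 := runComp_sum _ _ _
    have step1 : (∃ s' ∈ PSums (runComp (fun x y => decide (x < y)) a l),
        s' + t = (runComp (fun x y => decide (x < y)) a l).sum) ↔
        (l.length + 1 - t) ∈ PSums (runComp (fun x y => decide (x < y)) a l) := by
      rw [hsum]
      constructor
      · rintro ⟨s', hs', h⟩
        have hse : s' = l.length + 1 - t := by omega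
        exact hse ▸ hs'
      · intro h
        exact ⟨l.length + 1 - t, h, by omega⟩
    rw [step1, mem_PSums_runComp _ l a (l.length + 1 - t) (by omega) (by omega)]
    have hgd1 : (a :: l).reverse.getD (t-1) 0 = (a :: l).getD (l.length + 1 - t) 0 := by
      rw [getD_reverse _ _ (by simp; omega)]
      congr 1
      simp
      omega
    have hgd2 : (a :: l).reverse.getD t 0 = (a :: l).getD (l.length + 1 - t - 1) 0 := by
      rw [getD_reverse _ _ (by simp; omega)]
      congr 1
      simp
      omega
    rw [hgd1, hgd2]
    have hne : (a :: l).getD (l.length + 1 - t - 1) 0 ≠ (a :: l).getD (l.length + 1 - t) 0 := by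
      have hc := chain'_getD hch (l.length + 1 - t - 1) (by simp; omega)
      have hss : l.length + 1 - t - 1 + 1 = l.length + 1 - t := by omega
      rwa [hss] at hc
    rw [decide_eq_false_iff_not]
    constructor
    · intro h
      omega
    · intro h
      omega
/-! ### Section 4: counts and replicates -/

def cntL (k : ℕ) (α : List ℕ) : List ℕ := (List.range k).map fun j => α.count (j+1)

def repL (k : ℕ) (b : List ℕ) : List ℕ :=
  ((List.range k).map fun j => List.replicate (b.getD j 0) (j+1)).flatten

lemma cntL_length (k : ℕ) (α : List ℕ) : (cntL k α).length = k := by simp [cntL]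

lemma countP_bound_succ (α : List ℕ) (m : ℕ) :
    α.countP (fun a => decide (1 ≤ a ∧ a ≤ m+1)) =
      α.countP (fun a => decide (1 ≤ a ∧ a ≤ m)) + α.count (m+1) := by
  induction α with
  | nil => simp
  | cons x α ih =>
    simp only [List.countP_cons, List.count_cons, ih]
    by_cases h1 : x = m + 1
    · subst h1
      simp
      omega
    · by_cases h2 : 1 ≤ x ∧ x ≤ m
      · have h3 : 1 ≤ x ∧ x ≤ m + 1 := by omega
        simp [h1, h2, h3]
        omega
      · have h3 : ¬(1 ≤ x ∧ x ≤ m + 1) := by omega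
        simp [h1, h2, h3]

lemma sum_range_counts (α : List ℕ) (m : ℕ) :
    ((List.range m).map fun j => α.count (j+1)).sum =
      α.countP (fun a => decide (1 ≤ a ∧ a ≤ m)) := by
  induction m with
  | zero =>
    simp only [List.range_zero, List.map_nil, List.sum_nil]
    symm
    rw [List.countP_eq_zero]
    intro a _
    simp
    omega
  | succ m ih =>
    rw [List.range_succ, List.map_append, List.sum_append, ih, countP_bound_succ]
    simp

lemma take_cntL_sum (k : ℕ) (α : List ℕ) {m : ℕ} (hm : m ≤ k) :
    ((cntL k α).take m).sum = α.countP (fun a => decide (1 ≤ a ∧ a ≤ m)) := by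
  rw [cntL, ← List.map_take, List.take_range, min_eq_left hm, sum_range_counts]

lemma cntL_sum (k : ℕ) (α : List ℕ) (hpos : ∀ x ∈ α, 1 ≤ x) (hle : ∀ x ∈ α, x ≤ k) :
    (cntL k α).sum = α.length := by
  have h1 : (cntL k α).sum = ((cntL k α).take k).sum := by
    rw [List.take_of_length_le (by rw [cntL_length])]
  rw [h1, take_cntL_sum k α le_rfl, List.countP_eq_length]
  intro a ha
  have := hpos a ha
  have := hle a ha
  simp
  omega

lemma sorted_getElem_le {α : List ℕ} (h : α.Pairwise (· ≤ ·)) {i j : ℕ}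
    (hij : i ≤ j) (hj : j < α.length) : α[i]'(by omega) ≤ α[j] := by
  rcases Nat.eq_or_lt_of_le hij with rfl | hlt
  · exact le_refl _
  · exact List.pairwise_iff_getElem.mp h i j (by omega) hj hlt

lemma countP_sorted_eq {α : List ℕ} (hsort : α.Pairwise (· ≤ ·)) (hpos : ∀ x ∈ α, 1 ≤ x)
    {t m : ℕ} (h0 : 0 < t) (ht : t < α.length)
    (h1 : α[t-1]'(by omega) ≤ m) (h2 : m < α[t]) :
    α.countP (fun a => decide (1 ≤ a ∧ a ≤ m)) = t := by
  have hsplit : α = α.take t ++ α.drop t := (List.take_append_drop t α).symm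
  conv_lhs => rw [hsplit]
  rw [List.countP_append]
  have htake : (α.take t).countP (fun a => decide (1 ≤ a ∧ a ≤ m)) = t := by
    have hlen : (α.take t).length = t := by rw [List.length_take]; omega
    conv_rhs => rw [← hlen]
    apply List.countP_eq_length.mpr
    intro a ha
    obtain ⟨i, hi, rfl⟩ := List.mem_iff_getElem.mp ha
    rw [List.getElem_take] at *
    have hile : i < t := by rw [hlen] at hi; omega
    have hle1 : α[i]'(by omega) ≤ α[t-1]'(by omega) := sorted_getElem_le hsort (by omega) (by omega)
    have hp1 : 1 ≤ α[i]'(by omega) := hpos _ (List.getElem_mem _)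
    simp
    omega
  have hdrop : (α.drop t).countP (fun a => decide (1 ≤ a ∧ a ≤ m)) = 0 := by
    rw [List.countP_eq_zero]
    intro a ha
    obtain ⟨i, hi, rfl⟩ := List.mem_iff_getElem.mp ha
    rw [List.getElem_drop] at *
    have hge : α[t] ≤ α[t+i]'(by rw [List.length_drop] at hi; omega) :=
      sorted_getElem_le hsort (by omega) (by rw [List.length_drop] at hi; omega)
    simp
    omega
  omega

lemma mem_PSums_cntL {k : ℕ} {α : List ℕ} (hsort : α.Pairwise (· ≤ ·))
    (hpos : ∀ x ∈ α, 1 ≤ x) (hle : ∀ x ∈ α, x ≤ k) {t : ℕ} (h0 : 0 < t) (ht : t < α.length) :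
    t ∈ PSums (cntL k α) ↔ α.getD (t-1) 0 < α.getD t 0 := by
  rw [List.getD_eq_getElem _ _ (by omega), List.getD_eq_getElem _ _ ht]
  constructor
  · rintro ⟨m', hm'⟩
    set m := min m' k with hmdef
    have hmk : m ≤ k := min_le_right _ _
    have hm : ((cntL k α).take m).sum = t := by
      rcases le_total m' k with h | h
      · rwa [hmdef, min_eq_left h]
      · rw [hmdef, min_eq_right h, List.take_of_length_le (by rw [cntL_length])]
        rwa [List.take_of_length_le (by rw [cntL_length]; exact h)] at hm'
    rw [take_cntL_sum k α hmk] at hm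
    -- now α.countP (1 ≤ · ≤ m) = t
    have hup : α[t]'ht > m := by
      by_contra hc
      push_neg at hc
      have hcount : α.countP (fun a => decide (1 ≤ a ∧ a ≤ m)) ≥ t + 1 := by
        have hsplit : α = α.take (t+1) ++ α.drop (t+1) := (List.take_append_drop _ α).symm
        conv_lhs => rw [hsplit]
        rw [List.countP_append]
        have : (α.take (t+1)).countP (fun a => decide (1 ≤ a ∧ a ≤ m)) = t + 1 := by
          have hlen : (α.take (t+1)).length = t + 1 := by rw [List.length_take]; omega
          conv_rhs => rw [← hlen]
          apply List.countP_eq_length.mpr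
          intro a ha
          obtain ⟨i, hi, rfl⟩ := List.mem_iff_getElem.mp ha
          rw [List.getElem_take] at *
          have hile : i ≤ t := by rw [hlen] at hi; omega
          have := sorted_getElem_le hsort hile ht
          have := hpos (α[i]'(by omega)) (List.getElem_mem _)
          simp
          omega
        omega
      omega
    have hdown : α[t-1]'(by omega) ≤ m := by
      by_contra hc
      push_neg at hc
      have hcount : α.countP (fun a => decide (1 ≤ a ∧ a ≤ m)) ≤ t - 1 := by
        have hsplit : α = α.take (t-1) ++ α.drop (t-1) := (List.take_append_drop _ α).symm
        conv_lhs => rw [hsplit]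
        rw [List.countP_append]
        have hd : (α.drop (t-1)).countP (fun a => decide (1 ≤ a ∧ a ≤ m)) = 0 := by
          rw [List.countP_eq_zero]
          intro a ha
          obtain ⟨i, hi, rfl⟩ := List.mem_iff_getElem.mp ha
          rw [List.getElem_drop] at *
          have hge : α[t-1]'(by omega) ≤ α[t-1+i]'(by rw [List.length_drop] at hi; omega) :=
            sorted_getElem_le hsort (by omega) (by rw [List.length_drop] at hi; omega)
          simp
          omega
        have htk : (α.take (t-1)).countP (fun a => decide (1 ≤ a ∧ a ≤ m)) ≤ t - 1 := by
          calc (α.take (t-1)).countP _ ≤ (α.take (t-1)).length := List.countP_le_length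
            _ ≤ t - 1 := by rw [List.length_take]; omega
        omega
      omega
    omega
  · intro hlt
    refine ⟨α[t-1]'(by omega), ?_⟩
    have hmk : α[t-1]'(by omega) ≤ k := hle _ (List.getElem_mem _)
    rw [take_cntL_sum k α hmk]
    exact countP_sorted_eq hsort hpos h0 ht le_rfl hlt
/-! ### Section 5: repL -/

lemma repL_mem {k : ℕ} {b : List ℕ} {x : ℕ} (hx : x ∈ repL k b) : 1 ≤ x ∧ x ≤ k := by
  rw [repL, List.mem_flatten] at hx
  obtain ⟨l, hl, hxl⟩ := hx
  rw [List.mem_map] at hl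
  obtain ⟨j, hj, rfl⟩ := hl
  rw [List.mem_range] at hj
  have := List.eq_of_mem_replicate hxl
  omega

lemma sum_range_getD (b : List ℕ) : ((List.range b.length).map fun j => b.getD j 0).sum = b.sum := by
  induction b with
  | nil => simp
  | cons x b ih =>
    rw [List.length_cons, List.range_succ_eq_map, List.map_cons, List.map_map]
    simp only [List.getD_cons_zero, Function.comp_def, List.getD_cons_succ, List.sum_cons]
    rw [ih]

lemma repL_length {k : ℕ} {b : List ℕ} (hb : b.length = k) : (repL k b).length = b.sum := by
  rw [repL, List.length_flatten, List.map_map]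
  have : (List.map (List.length ∘ fun j => List.replicate (b.getD j 0) (j + 1)) (List.range k)).sum
      = ((List.range k).map fun j => b.getD j 0).sum := by
    congr 1
    apply List.map_congr_left
    intro j _
    simp
  rw [this, ← hb, sum_range_getD]

lemma repL_sorted (k : ℕ) (b : List ℕ) : (repL k b).Pairwise (· ≤ ·) := by
  rw [repL, List.pairwise_flatten]
  refine ⟨?_, ?_⟩
  · intro l hl
    rw [List.mem_map] at hl
    obtain ⟨j, _, rfl⟩ := hl
    exact List.pairwise_replicate.mpr (Or.inr (le_refl _))
  · have : List.Pairwise (· < ·) (List.range k) := List.pairwise_lt_range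
    refine List.Pairwise.map _ ?_ this
    intro i j hij x hx y hy
    have := List.eq_of_mem_replicate hx
    have := List.eq_of_mem_replicate hy
    omega

lemma sum_range_single (k j c : ℕ) (hj : j < k) :
    ((List.range k).map fun i => if i = j then c else 0).sum = c := by
  induction k with
  | zero => omega
  | succ k ih =>
    rw [List.range_succ, List.map_append, List.sum_append]
    rcases Nat.lt_or_ge j k with h | h
    · rw [ih h]
      simp
      omega
    · have hjk : j = k := by omega
      subst hjk
      simp only [List.map_cons, List.map_nil, if_pos rfl, List.sum_cons, List.sum_nil]
      have : ((List.range j).map fun i => if i = j then c else 0).sum = 0 := by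
        rw [List.sum_eq_zero]
        intro x hx
        rw [List.mem_map] at hx
        obtain ⟨i, hi, rfl⟩ := hx
        rw [List.mem_range] at hi
        simp [Nat.ne_of_lt hi]
      rw [this]
      simp

lemma repL_count {k : ℕ} (b : List ℕ) {j : ℕ} (hj : j < k) :
    (repL k b).count (j+1) = b.getD j 0 := by
  rw [repL, List.count_flatten, List.map_map]
  have heq : List.map (List.count (j + 1) ∘ fun i => List.replicate (b.getD i 0) (i + 1))
      (List.range k) = (List.range k).map fun i => if i = j then b.getD j 0 else 0 := by
    apply List.map_congr_left
    intro i _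
    simp only [Function.comp_apply, List.count_replicate]
    by_cases hij : i = j
    · subst hij; simp
    · have : ¬(j + 1 = i + 1) := by omega
      simp [this, hij]
  rw [heq, sum_range_single _ _ _ hj]

lemma repL_count_zero {k : ℕ} (b : List ℕ) {m : ℕ} (hm : m = 0 ∨ k < m) :
    (repL k b).count m = 0 := by
  rw [List.count_eq_zero]
  intro hmem
  have := repL_mem hmem
  omega

lemma cntL_repL {k : ℕ} {b : List ℕ} (hb : b.length = k) : cntL k (repL k b) = b := by
  apply List.ext_getElem
  · rw [cntL_length, hb]
  · intro j h1 h2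
    have hjk : j < k := by rwa [cntL_length] at h1
    simp only [cntL, List.getElem_map, List.getElem_range]
    rw [repL_count b hjk, List.getD_eq_getElem _ _ h2]

lemma repL_cntL {k : ℕ} {α : List ℕ} (hsort : α.Pairwise (· ≤ ·))
    (hpos : ∀ x ∈ α, 1 ≤ x) (hle : ∀ x ∈ α, x ≤ k) : repL k (cntL k α) = α := by
  apply List.Perm.eq_of_pairwise' (repL_sorted k (cntL k α)) hsort
  rw [List.perm_iff_count]
  intro m
  cases m with
  | zero =>
    rw [repL_count_zero _ (Or.inl rfl), eq_comm, List.count_eq_zero]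
    intro hmem
    exact absurd (hpos 0 hmem) (by omega)
  | succ m' =>
    rcases Nat.lt_or_ge m' k with h | h
    · rw [repL_count _ h]
      have hgd : (cntL k α).getD m' 0 = List.count (m'+1) α := by
        rw [List.getD_eq_getElem _ _ (by rw [cntL_length]; exact h)]
        simp only [cntL, List.getElem_map, List.getElem_range]
      exact hgd
    · rw [repL_count_zero _ (Or.inr (by omega)), eq_comm, List.count_eq_zero]
      intro hmem
      exact absurd (hle _ hmem) (by omega)

lemma repL_map_X_prod {k : ℕ} {b : List ℕ} (hb : b.length = k) :
    ((repL k b).map (X : ℕ → MvPolynomial ℕ ℤ)).prod = wcMonomial b := by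
  rw [repL, List.map_flatten, List.prod_flatten, List.map_map, List.map_map, wcMonomial, hb]
  congr 1
  apply List.map_congr_left
  intro j _
  simp only [Function.comp_apply, List.map_replicate, List.prod_replicate]
/-! ### Section 6: inversion sets of permutations -/

def invSet (v : Equiv.Perm ℕ) : Set (ℕ × ℕ) := {p | p.1 < p.2 ∧ v p.2 < v p.1}

lemma permLen_eq_ncard {v : Equiv.Perm ℕ} (h0 : v 0 = 0) : permLen v = (invSet v).ncard := by
  unfold permLen
  congr 1
  ext ⟨p, q⟩
  simp only [Set.mem_setOf_eq, invSet]
  constructor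
  · rintro ⟨-, h2, h3⟩; exact ⟨h2, h3⟩
  · rintro ⟨h2, h3⟩
    refine ⟨?_, h2, h3⟩
    by_contra hc
    push_neg at hc
    interval_cases p
    rw [h0] at h3
    omega

lemma invSet_subset {v : Equiv.Perm ℕ} {N : ℕ} (hN : ∀ m, N < m → v m = m) :
    invSet v ⊆ Set.Iic N ×ˢ Set.Iic N := by
  rintro ⟨p, q⟩ hpq
  obtain ⟨h1, h2'⟩ := hpq
  have h2 : v q < v p := h2'
  simp only [Set.mem_prod, Set.mem_Iic]
  have hq : q ≤ N := by
    by_contra hc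
    push_neg at hc
    rw [hN q hc] at h2
    rcases Nat.lt_or_ge N p with hp | hp
    · rw [hN p hp] at h2; omega
    · have hvp : v p ≤ N := by
        by_contra hvc
        push_neg at hvc
        have := hN _ hvc
        have := v.injective (by rw [this] : v (v p) = v p)
        omega
      omega
  exact ⟨by omega, hq⟩

lemma invSet_finite {v : Equiv.Perm ℕ} {N : ℕ} (hN : ∀ m, N < m → v m = m) :
    (invSet v).Finite :=
  Set.Finite.subset (Set.Finite.prod (Set.finite_Iic N) (Set.finite_Iic N)) (invSet_subset hN)

lemma symm_mul_simpleT (v : Equiv.Perm ℕ) (i x : ℕ) :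
    (simpleT i * v).symm x = v.symm (Equiv.swap i (i+1) x) := by
  rw [Equiv.symm_apply_eq]
  simp only [simpleT, Equiv.Perm.mul_apply, Equiv.apply_symm_apply, Equiv.swap_apply_self]

lemma invSet_mul_swap {v : Equiv.Perm ℕ} {i : ℕ} (h : v.symm i < v.symm (i+1)) :
    ((v.symm i, v.symm (i+1)) ∉ invSet v) ∧
    invSet (simpleT i * v) = insert (v.symm i, v.symm (i+1)) (invSet v) := by
  constructor
  · rintro ⟨-, hlt⟩
    simp only [Equiv.apply_symm_apply] at hlt
    omega
  · ext ⟨p, q⟩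
    have hiff : ((p, q) = (v.symm i, v.symm (i+1))) ↔ (v p = i ∧ v q = i + 1) := by
      rw [Prod.mk.injEq, Equiv.eq_symm_apply, Equiv.eq_symm_apply]
    simp only [invSet, Set.mem_setOf_eq, Set.mem_insert_iff, hiff, simpleT,
      Equiv.Perm.mul_apply]
    constructor
    · rintro ⟨hpq, hlt⟩
      simp only [Equiv.swap_apply_def] at hlt
      split_ifs at hlt <;> omega
    · rintro (⟨hp, hq⟩ | ⟨hpq, hlt⟩)
      · have hp' : p = v.symm i := by rw [Equiv.eq_symm_apply]; exact hp
        have hq' : q = v.symm (i+1) := by rw [Equiv.eq_symm_apply]; exact hq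
        subst hp'; subst hq'
        refine ⟨h, ?_⟩
        simp only [Equiv.apply_symm_apply, Equiv.swap_apply_left, Equiv.swap_apply_right]
        omega
      · refine ⟨hpq, ?_⟩
        by_cases h2 : v p = i + 1
        · by_cases h1 : v q = i
          · exfalso
            have hq' : q = v.symm i := by rw [Equiv.eq_symm_apply]; exact h1
            have hp' : p = v.symm (i+1) := by rw [Equiv.eq_symm_apply]; exact h2
            omega
          · simp only [Equiv.swap_apply_def]
            split_ifs <;> omega
        · simp only [Equiv.swap_apply_def]
          split_ifs <;> omega

lemma invSet_mul_swap_desc {v : Equiv.Perm ℕ} {i : ℕ} (h : v.symm (i+1) < v.symm i) :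
    (((simpleT i * v).symm i, (simpleT i * v).symm (i+1)) ∉ invSet (simpleT i * v)) ∧
    invSet v = insert ((simpleT i * v).symm i, (simpleT i * v).symm (i+1))
      (invSet (simpleT i * v)) := by
  have hasc : (simpleT i * v).symm i < (simpleT i * v).symm (i+1) := by
    rw [symm_mul_simpleT, symm_mul_simpleT, Equiv.swap_apply_left, Equiv.swap_apply_right]
    exact h
  have key := invSet_mul_swap hasc
  have hvv : simpleT i * (simpleT i * v) = v := by
    rw [← mul_assoc, simpleT, Equiv.swap_mul_self, one_mul]
  rw [hvv] at key
  exact key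

/-! ### words -/

def prodW (ρ : List ℕ) : Equiv.Perm ℕ := (ρ.map simpleT).prod

lemma prodW_nil : prodW [] = 1 := rfl

lemma prodW_cons (a : ℕ) (t : List ℕ) : prodW (a :: t) = simpleT a * prodW t := by
  simp [prodW]

lemma simpleT_fix {i m : ℕ} (h1 : m ≠ i) (h2 : m ≠ i + 1) : simpleT i m = m :=
  Equiv.swap_apply_of_ne_of_ne h1 h2

lemma prodW_fix_large {ρ : List ℕ} {M : ℕ} (h : ∀ i ∈ ρ, i ≤ M) :
    ∀ m, M + 1 < m → prodW ρ m = m := by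
  induction ρ with
  | nil => intro m _; rfl
  | cons a t ih =>
    intro m hm
    rw [prodW_cons, Equiv.Perm.mul_apply, ih (fun i hi => h i (by simp [hi])) m hm]
    have ha := h a (by simp)
    exact simpleT_fix (by omega) (by omega)

lemma foldr_max_le {ρ : List ℕ} : ∀ i ∈ ρ, i ≤ ρ.foldr max 0 := by
  induction ρ with
  | nil => simp
  | cons a t ih =>
    intro i hi
    rcases List.mem_cons.mp hi with rfl | hi
    · exact le_max_left _ _
    · exact le_max_of_le_right (ih i hi)

lemma invSet_prodW_finite (ρ : List ℕ) : (invSet (prodW ρ)).Finite :=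
  invSet_finite (N := ρ.foldr max 0 + 1)
    (fun m hm => prodW_fix_large (fun i hi => foldr_max_le i hi) m hm)

lemma ncard_le_length (ρ : List ℕ) : (invSet (prodW ρ)).ncard ≤ ρ.length := by
  induction ρ with
  | nil =>
    have : invSet (prodW []) = ∅ := by
      ext ⟨p, q⟩
      simp [invSet, prodW_nil]
      omega
    simp [this]
  | cons a t ih =>
    rw [prodW_cons]
    set v := prodW t with hv
    rcases lt_trichotomy (v.symm a) (v.symm (a+1)) with hlt | heq | hgt
    · have key := invSet_mul_swap hlt
      rw [key.2]
      calc (insert (v.symm a, v.symm (a+1)) (invSet v)).ncard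
          ≤ (invSet v).ncard + 1 := Set.ncard_insert_le _ _
        _ ≤ t.length + 1 := by omega
        _ = (a :: t).length := by simp
    · exfalso
      have := v.symm.injective heq
      omega
    · have key := invSet_mul_swap_desc hgt
      have hsub : invSet (simpleT a * v) ⊆ invSet v := by
        rw [key.2]
        exact Set.subset_insert _ _
      calc (invSet (simpleT a * v)).ncard
          ≤ (invSet v).ncard := Set.ncard_le_ncard hsub (invSet_prodW_finite t)
        _ ≤ t.length := ih
        _ ≤ (a :: t).length := by simp
/-! ### Section 7: reduced words -/

lemma reduced_cons {a : ℕ} {t : List ℕ}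
    (h : (invSet (prodW (a :: t))).ncard = t.length + 1) :
    (invSet (prodW t)).ncard = t.length ∧
    (prodW t).symm a < (prodW t).symm (a+1) ∧
    invSet (prodW (a :: t)) =
      insert ((prodW t).symm a, (prodW t).symm (a+1)) (invSet (prodW t)) ∧
    ((prodW t).symm a, (prodW t).symm (a+1)) ∉ invSet (prodW t) := by
  set v := prodW t with hv
  rcases lt_trichotomy (v.symm a) (v.symm (a+1)) with hlt | heq | hgt
  · have key := invSet_mul_swap hlt
    rw [prodW_cons, ← hv] at h
    rw [key.2, Set.ncard_insert_of_notMem key.1 (invSet_prodW_finite t)] at h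
    have h1 : (invSet v).ncard = t.length := by omega
    refine ⟨h1, hlt, ?_, key.1⟩
    rw [prodW_cons, ← hv, key.2]
  · exfalso
    have := v.symm.injective heq
    omega
  · exfalso
    have key := invSet_mul_swap_desc hgt
    rw [prodW_cons, ← hv] at h
    have hsub : invSet (simpleT a * v) ⊆ invSet v := key.2 ▸ Set.subset_insert _ _
    have hle : (invSet (simpleT a * v)).ncard ≤ (invSet v).ncard :=
      Set.ncard_le_ncard hsub (invSet_prodW_finite t)
    have := ncard_le_length t
    rw [← hv] at this
    omega

lemma reduced_tail {a : ℕ} {t : List ℕ}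
    (h : (invSet (prodW (a :: t))).ncard = (a :: t).length) :
    (invSet (prodW t)).ncard = t.length :=
  (reduced_cons (by simpa using h)).1

lemma reduced_subset {a : ℕ} {t : List ℕ}
    (h : (invSet (prodW (a :: t))).ncard = (a :: t).length) :
    invSet (prodW t) ⊆ invSet (prodW (a :: t)) := by
  have key := reduced_cons (by simpa using h)
  rw [key.2.2.1]
  exact Set.subset_insert _ _

lemma prodW_fix_low {t : List ℕ} {n : ℕ} (h : ∀ i ∈ t, n < i) :
    ∀ m, m ≤ n → prodW t m = m := by
  induction t with
  | nil => intro m _; rfl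
  | cons a t ih =>
    intro m hm
    rw [prodW_cons, Equiv.Perm.mul_apply, ih (fun i hi => h i (by simp [hi])) m hm]
    have ha := h a (by simp)
    exact simpleT_fix (by omega) (by omega)

lemma symm_fix {v : Equiv.Perm ℕ} {m : ℕ} (h : v m = m) : v.symm m = m := by
  rw [Equiv.symm_apply_eq]
  exact h.symm

lemma letters_high {n : ℕ} {T : Set (ℕ × ℕ)} (hT : ∀ p ∈ T, n < p.1) :
    ∀ ρ : List ℕ, (invSet (prodW ρ)).ncard = ρ.length → invSet (prodW ρ) ⊆ T →
      ∀ i ∈ ρ, n < i := by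
  intro ρ
  induction ρ with
  | nil => intro _ _ i hi; simp at hi
  | cons a t ih =>
    intro hred hsub i hi
    have htsub : invSet (prodW t) ⊆ T := (reduced_subset hred).trans hsub
    have hts := ih (reduced_tail hred) htsub
    rcases List.mem_cons.mp hi with rfl | hi
    · have key := reduced_cons (by simpa using hred)
      have hpair : ((prodW t).symm i, (prodW t).symm (i+1)) ∈ T := by
        apply hsub
        rw [key.2.2.1]
        exact Set.mem_insert _ _
      have h1 := hT _ hpair
      simp only at h1
      by_contra hc
      push_neg at hc
      have hfix : prodW t i = i := prodW_fix_low hts i hc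
      rw [symm_fix hfix] at h1
      omega
    · exact hts i hi

lemma prodW_bound {t : List ℕ} {N : ℕ} (h : ∀ i ∈ t, i ≤ N) :
    ∀ m, m ≤ N + 1 → prodW t m ≤ N + 1 := by
  induction t with
  | nil => intro m hm; exact hm
  | cons a t ih =>
    intro m hm
    rw [prodW_cons, Equiv.Perm.mul_apply]
    have hint := ih (fun i hi => h i (by simp [hi])) m hm
    have ha := h a (by simp)
    set z := prodW t m with hz
    by_cases h1 : z = a
    · rw [h1, simpleT, Equiv.swap_apply_left]; omega
    · by_cases h2 : z = a + 1
      · rw [h2, simpleT, Equiv.swap_apply_right]; omega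
      · rw [simpleT_fix h1 h2]; exact hint

lemma letters_low {N : ℕ} {T : Set (ℕ × ℕ)} (hT : ∀ p ∈ T, p.2 ≤ N) :
    ∀ ρ : List ℕ, (invSet (prodW ρ)).ncard = ρ.length → invSet (prodW ρ) ⊆ T →
      ∀ i ∈ ρ, i ≤ N := by
  intro ρ
  induction ρ with
  | nil => intro _ _ i hi; simp at hi
  | cons a t ih =>
    intro hred hsub i hi
    have htsub : invSet (prodW t) ⊆ T := (reduced_subset hred).trans hsub
    have hts := ih (reduced_tail hred) htsub
    rcases List.mem_cons.mp hi with rfl | hi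
    · have key := reduced_cons (by simpa using hred)
      have hpair : ((prodW t).symm i, (prodW t).symm (i+1)) ∈ T := by
        apply hsub
        rw [key.2.2.1]
        exact Set.mem_insert _ _
      have h1 := hT _ hpair
      simp only at h1
      -- (prodW t).symm (i+1) ≤ N, so i + 1 = prodW t ((prodW t).symm (i+1)) ≤ N + 1
      have happ : prodW t ((prodW t).symm (i+1)) = i + 1 := Equiv.apply_symm_apply _ _
      have hb := prodW_bound hts ((prodW t).symm (i+1)) (by omega)
      omega
    · exact hts i hi

lemma reduced_chain_ne : ∀ ρ : List ℕ, (invSet (prodW ρ)).ncard = ρ.length →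
    List.Chain' (· ≠ ·) ρ := by
  intro ρ
  induction ρ with
  | nil => intro _; exact List.isChain_nil
  | cons a t ih =>
    intro hred
    have hct := ih (reduced_tail hred)
    cases t with
    | nil => simp [List.Chain']
    | cons b t' =>
      show List.IsChain _ _
      rw [List.isChain_cons_cons]
      refine ⟨?_, hct⟩
      -- ascending conditions
      have key1 := reduced_cons (by exact hred)
      have key2 := reduced_cons (by simpa using reduced_tail hred)
      intro hab
      subst hab
      -- key1 : (prodW (a :: t')).symm a < (prodW (a :: t')).symm (a+1)
      have h1 := key1.2.1
      rw [prodW_cons, symm_mul_simpleT, symm_mul_simpleT, Equiv.swap_apply_left,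
        Equiv.swap_apply_right] at h1
      have h2 := key2.2.1
      omega
/-! ### Section 8: shifting and reduced word correspondence -/

lemma simpleT_shift {i n : ℕ} (hi : 1 ≤ i) (z : ℕ) :
    simpleT (i + n) (n + z) = n + simpleT i z := by
  by_cases h1 : z = i
  · subst h1
    have e1 : n + z = z + n := by omega
    rw [e1, simpleT, simpleT, Equiv.swap_apply_left, Equiv.swap_apply_left]
    omega
  · by_cases h2 : z = i + 1
    · subst h2
      have e1 : n + (i + 1) = i + n + 1 := by omega
      rw [e1, simpleT, simpleT, Equiv.swap_apply_right, Equiv.swap_apply_right]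
      omega
    · rw [simpleT_fix (by omega) (by omega), simpleT_fix h1 h2]

lemma prodW_zero {ρ : List ℕ} (h1 : ∀ i ∈ ρ, 1 ≤ i) : prodW ρ 0 = 0 :=
  prodW_fix_low (n := 0) (fun i hi => h1 i hi) 0 le_rfl

lemma shift_apply {ρ' : List ℕ} (h1 : ∀ i ∈ ρ', 1 ≤ i) (n : ℕ) :
    ∀ x, prodW (ρ'.map (· + n)) x = if x ≤ n then x else n + prodW ρ' (x - n) := by
  induction ρ' with
  | nil =>
    intro x
    simp only [List.map_nil, prodW_nil, Equiv.Perm.one_apply]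
    split <;> omega
  | cons i t ih =>
    intro x
    have hi : 1 ≤ i := h1 i (by simp)
    rw [List.map_cons, prodW_cons, Equiv.Perm.mul_apply,
      ih (fun j hj => h1 j (by simp [hj])) x]
    split
    · next hx => exact simpleT_fix (by omega) (by omega)
    · next hx =>
      rw [simpleT_shift hi, prodW_cons, Equiv.Perm.mul_apply]

lemma prodW_shift_iff {w W : Equiv.Perm ℕ} {n : ℕ} (hw0 : w 0 = 0)
    (hW1 : ∀ i, i ≤ n → W i = i) (hW2 : ∀ i, n < i → W i = n + w (i - n))
    {ρ' : List ℕ} (h1 : ∀ i ∈ ρ', 1 ≤ i) :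
    prodW (ρ'.map (· + n)) = W ↔ prodW ρ' = w := by
  constructor
  · intro hWeq
    apply Equiv.ext
    intro j
    rcases Nat.eq_zero_or_pos j with rfl | hj
    · rw [prodW_zero h1, hw0]
    · have := DFunLike.congr_fun hWeq (n + j)
      rw [shift_apply h1 n (n + j)] at this
      rw [if_neg (by omega)] at this
      rw [hW2 (n + j) (by omega)] at this
      have hsub : n + j - n = j := by omega
      rw [hsub] at this
      omega
  · intro hweq
    apply Equiv.ext
    intro x
    rw [shift_apply h1 n x]
    rcases le_or_gt x n with hx | hx
    · rw [if_pos hx, hW1 x hx]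
    · rw [if_neg (by omega), hW2 x hx, hweq]

lemma invSet_pos {v : Equiv.Perm ℕ} (h0 : v 0 = 0) : ∀ p ∈ invSet v, 1 ≤ p.1 := by
  rintro ⟨p, q⟩ hpq
  obtain ⟨h1, h2'⟩ := hpq
  have h2 : v q < v p := h2'
  by_contra hc
  push_neg at hc
  interval_cases p
  rw [h0] at h2
  omega

lemma w_pos {w : Equiv.Perm ℕ} (hw0 : w 0 = 0) {j : ℕ} (hj : 1 ≤ j) : 1 ≤ w j := by
  by_contra hc
  push_neg at hc
  have : w j = 0 := by omega
  have := w.injective (by rw [this, hw0] : w j = w 0)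
  omega

lemma invSet_W_eq {w W : Equiv.Perm ℕ} {n : ℕ} (hw0 : w 0 = 0)
    (hW1 : ∀ i, i ≤ n → W i = i) (hW2 : ∀ i, n < i → W i = n + w (i - n)) :
    invSet W = (fun p : ℕ × ℕ => (p.1 + n, p.2 + n)) '' invSet w := by
  ext ⟨P, Q⟩
  constructor
  · rintro ⟨hPQ, hinv⟩
    have hinv' : W Q < W P := hinv
    have hPn : n < P := by
      by_contra hc
      push_neg at hc
      rw [hW1 P hc] at hinv'
      rcases le_or_gt Q n with hQ | hQ
      · rw [hW1 Q hQ] at hinv'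
        omega
      · rw [hW2 Q hQ] at hinv'
        have := w_pos hw0 (j := Q - n) (by omega)
        omega
    have hQn : n < Q := by omega
    refine ⟨(P - n, Q - n), ⟨by simp; omega, ?_⟩, ?_⟩
    · rw [hW2 P hPn, hW2 Q hQn] at hinv'
      simp only
      omega
    · simp only [Prod.mk.injEq]
      omega
  · rintro ⟨⟨p, q⟩, ⟨hpq, hinv⟩, heq⟩
    simp only [Prod.mk.injEq] at heq
    obtain ⟨rfl, rfl⟩ := heq
    have hinv' : w q < w p := hinv
    refine ⟨by simp; omega, ?_⟩
    show W (q + n) < W (p + n)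
    rcases Nat.eq_zero_or_pos p with rfl | hp
    · rw [hW1 (0 + n) (by omega), hW2 (q + n) (by omega)]
      have : q + n - n = q := by omega
      rw [this]
      rw [hw0] at hinv'
      omega
    · rw [hW2 (p + n) (by omega), hW2 (q + n) (by omega)]
      have e1 : p + n - n = p := by omega
      have e2 : q + n - n = q := by omega
      rw [e1, e2]
      omega

lemma permLen_W_eq {w W : Equiv.Perm ℕ} {n : ℕ} (hw0 : w 0 = 0)
    (hW1 : ∀ i, i ≤ n → W i = i) (hW2 : ∀ i, n < i → W i = n + w (i - n)) :
    permLen W = permLen w := by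
  rw [permLen_eq_ncard (hW1 0 (by omega)), permLen_eq_ncard hw0,
    invSet_W_eq hw0 hW1 hW2]
  apply Set.ncard_image_of_injective
  rintro ⟨a, b⟩ ⟨c, d⟩ h
  simp only [Prod.mk.injEq] at h ⊢
  omega

lemma isReduced_ncard {v : Equiv.Perm ℕ} (h0 : v 0 = 0) {ρ : List ℕ}
    (h : IsReducedWord v ρ) : (invSet (prodW ρ)).ncard = ρ.length ∧ prodW ρ = v := by
  obtain ⟨hpos, hprod, hlen⟩ := h
  have hv : prodW ρ = v := hprod
  rw [hv, ← permLen_eq_ncard h0, ← hlen]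
  exact ⟨rfl, rfl⟩

lemma corr_fwd {w W : Equiv.Perm ℕ} {n : ℕ} (hw0 : w 0 = 0)
    (hW1 : ∀ i, i ≤ n → W i = i) (hW2 : ∀ i, n < i → W i = n + w (i - n))
    {ρ : List ℕ} (h : IsReducedWord W ρ) :
    (∀ i ∈ ρ, n < i) ∧ IsReducedWord w (ρ.map (· - n)) ∧
      ρ = (ρ.map (· - n)).map (· + n) := by
  have hW0 : W 0 = 0 := hW1 0 (by omega)
  obtain ⟨hncard, hprod⟩ := isReduced_ncard hW0 h
  have hhigh : ∀ i ∈ ρ, n < i := by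
    apply letters_high (T := invSet W) ?_ ρ hncard (by rw [hprod])
    intro p hp
    rw [invSet_W_eq hw0 hW1 hW2] at hp
    obtain ⟨⟨a, b⟩, hab, heq⟩ := hp
    have ha : 1 ≤ a := by
      have := invSet_pos hw0 _ hab
      exact this
    rw [← heq]
    simp only
    omega
  have hmapeq : ρ = (ρ.map (· - n)).map (· + n) := by
    rw [List.map_map]
    conv_lhs => rw [← List.map_id ρ]
    apply List.map_congr_left
    intro i hi
    have := hhigh i hi
    simp only [Function.comp_apply, id_eq]
    omega
  have h1' : ∀ i ∈ ρ.map (· - n), 1 ≤ i := by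
    intro i hi
    rw [List.mem_map] at hi
    obtain ⟨j, hj, rfl⟩ := hi
    have := hhigh j hj
    omega
  refine ⟨hhigh, ⟨h1', ?_, ?_⟩, hmapeq⟩
  · have : prodW ((ρ.map (· - n)).map (· + n)) = W := by rw [← hmapeq]; exact hprod
    exact (prodW_shift_iff hw0 hW1 hW2 h1').mp this
  · rw [List.length_map, h.2.2, permLen_W_eq hw0 hW1 hW2]

lemma corr_bwd {w W : Equiv.Perm ℕ} {n : ℕ} (hw0 : w 0 = 0)
    (hW1 : ∀ i, i ≤ n → W i = i) (hW2 : ∀ i, n < i → W i = n + w (i - n))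
    {ρ' : List ℕ} (h : IsReducedWord w ρ') : IsReducedWord W (ρ'.map (· + n)) := by
  obtain ⟨hpos, hprod, hlen⟩ := h
  refine ⟨?_, ?_, ?_⟩
  · intro i hi
    rw [List.mem_map] at hi
    obtain ⟨j, hj, rfl⟩ := hi
    have := hpos j hj
    omega
  · exact (prodW_shift_iff hw0 hW1 hW2 hpos).mpr hprod
  · rw [List.length_map, hlen, permLen_W_eq hw0 hW1 hW2]

/-! ### finiteness -/

lemma listset_finite (m N : ℕ) : {l : List ℕ | l.length = m ∧ ∀ x ∈ l, x ≤ N}.Finite := by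
  induction m with
  | zero =>
    apply Set.Finite.subset (Set.finite_singleton ([] : List ℕ))
    rintro l ⟨hl, -⟩
    rw [List.length_eq_zero_iff] at hl
    simp [hl]
  | succ m ih =>
    apply Set.Finite.subset (Set.Finite.image2 List.cons (Set.finite_Iic N) ih)
    rintro l ⟨hl, hb⟩
    cases l with
    | nil => simp at hl
    | cons x t =>
      refine Set.mem_image2_of_mem ?_ ?_
      · exact hb x (by simp)
      · exact ⟨by simpa using hl, fun y hy => hb y (by simp [hy])⟩

lemma reduced_words_finite {v : Equiv.Perm ℕ} {N : ℕ} (h0 : v 0 = 0)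
    (hN : ∀ m, N < m → v m = m) : {ρ | IsReducedWord v ρ}.Finite := by
  apply Set.Finite.subset (listset_finite (permLen v) N)
  intro ρ hρ
  obtain ⟨hncard, hprod⟩ := isReduced_ncard h0 hρ
  refine ⟨hρ.2.2, ?_⟩
  apply letters_low (T := invSet v) ?_ ρ hncard (by rw [hprod])
  intro p hp
  have := invSet_subset hN hp
  simp only [Set.mem_prod, Set.mem_Iic] at this
  exact this.2
/-! ### Section 9: the core computation -/

lemma compat_finite (ρ : List ℕ) : {α : List ℕ | IsCompatible ρ α}.Finite := by
  apply Set.Finite.subset (listset_finite ρ.length (ρ.foldr max 0))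
  intro α hα
  obtain ⟨hlen, _, _, _, h5⟩ := hα
  refine ⟨hlen, ?_⟩
  intro x hx
  obtain ⟨j, hj, rfl⟩ := List.mem_iff_getElem.mp hx
  have h5j := h5 j hj
  rw [List.getD_eq_getElem _ _ hj] at h5j
  have hjrev : j < ρ.reverse.length := by rw [List.length_reverse]; omega
  rw [List.getD_eq_getElem _ _ hjrev] at h5j
  have hmem : ρ.reverse[j] ∈ ρ := by
    rw [← List.mem_reverse]
    exact List.getElem_mem _
  exact le_trans h5j (foldr_max_le _ hmem)

lemma quasi_finite (k : ℕ) (γ : List ℕ) :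
    {b : List ℕ | b.length = k ∧ Refines (flat b) γ}.Finite := by
  apply Set.Finite.subset (listset_finite k γ.sum)
  rintro b ⟨hlen, href⟩
  refine ⟨hlen, ?_⟩
  intro x hx
  calc x ≤ b.sum := List.le_sum_of_mem hx
    _ = (flat b).sum := (flat_sum b).symm
    _ = γ.sum := refines_sum href

lemma truncVars_X (k i : ℕ) : truncVars k (X i : MvPolynomial ℕ ℤ) =
    if i ≤ k then X i else 0 := by
  simp [truncVars]

lemma trunc_prod_eq_zero {k : ℕ} {α : List ℕ} (hx : ∃ x ∈ α, ¬ x ≤ k) :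
    truncVars k (((α.map X).prod : MvPolynomial ℕ ℤ)) = 0 := by
  obtain ⟨x, hxm, hxk⟩ := hx
  rw [map_list_prod]
  apply List.prod_eq_zero
  rw [List.map_map, List.mem_map]
  exact ⟨x, hxm, by simp [Function.comp_apply, truncVars_X, hxk]⟩

lemma trunc_prod_eq_self {k : ℕ} {α : List ℕ} (hx : ∀ x ∈ α, x ≤ k) :
    truncVars k (((α.map X).prod : MvPolynomial ℕ ℤ)) = (α.map X).prod := by
  rw [map_list_prod, List.map_map]
  congr 1
  apply List.map_congr_left
  intro x hxm
  simp [Function.comp_apply, truncVars_X, hx x hxm]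

lemma getD_rev_map {ρ' : List ℕ} {n j : ℕ} (hj : j < ρ'.length) :
    ((ρ'.map (· + n)).reverse).getD j 0 = ρ'.reverse.getD j 0 + n := by
  rw [← List.map_reverse]
  rw [List.getD_eq_getElem _ _ (by simpa using hj), List.getD_eq_getElem _ _ (by simpa using hj)]
  rw [List.getElem_map]

lemma chain_le_of_compat {α : List ℕ}
    (h3 : ∀ j, j + 1 < α.length → α.getD j 0 ≤ α.getD (j + 1) 0) :
    α.Pairwise (· ≤ ·) := by
  rw [← List.isChain_iff_pairwise]
  apply List.isChain_iff_getElem.mpr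
  intro i hi
  have := h3 i (by omega)
  rw [List.getD_eq_getElem _ _ (by omega), List.getD_eq_getElem _ _ (by omega)] at this
  simpa [List.get_eq_getElem] using this

lemma partD {n k : ℕ} (hk : 1 ≤ k) (hkn : k ≤ n) {ρ' : List ℕ}
    (h1 : ∀ i ∈ ρ', 1 ≤ i) (hch : List.Chain' (· ≠ ·) ρ') :
    truncVars k (∑ᶠ α ∈ {α : List ℕ | IsCompatible (ρ'.map (· + n)) α},
        ((α.map X).prod : MvPolynomial ℕ ℤ)) = fundQuasi k (strongDes ρ') := by
  classical
  have hCfin := compat_finite (ρ'.map (· + n))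
  have hBfin := quasi_finite k (strongDes ρ')
  rw [finsum_mem_eq_finite_toFinset_sum _ hCfin, map_sum]
  rw [fundQuasi, finsum_mem_eq_finite_toFinset_sum _ hBfin]
  rw [← Finset.sum_filter_add_sum_filter_not hCfin.toFinset (fun α => ∀ x ∈ α, x ≤ k)]
  have hzero : ∑ α ∈ hCfin.toFinset.filter (fun α => ¬ ∀ x ∈ α, x ≤ k),
      truncVars k (((α.map X).prod : MvPolynomial ℕ ℤ)) = 0 := by
    apply Finset.sum_eq_zero
    intro α hα
    rw [Finset.mem_filter] at hα
    obtain ⟨-, hα2⟩ := hα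
    apply trunc_prod_eq_zero
    push_neg at hα2
    obtain ⟨x, hx1, hx2⟩ := hα2
    exact ⟨x, hx1, by omega⟩
  rw [hzero, add_zero]
  -- main bijection
  apply Finset.sum_nbij' (cntL k) (repL k)
  · -- membership forward
    intro α hα
    rw [Finset.mem_filter, Set.Finite.mem_toFinset] at hα
    obtain ⟨hcomp, hle⟩ := hα
    obtain ⟨hlen0, h2, h3, h4, h5⟩ := hcomp
    have hlen : α.length = ρ'.length := by rw [hlen0, List.length_map]
    have hpos : ∀ x ∈ α, 1 ≤ x := by
      intro x hx
      obtain ⟨j, hj, rfl⟩ := List.mem_iff_getElem.mp hx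
      have := h2 j hj
      rwa [List.getD_eq_getElem _ _ hj] at this
    have hsort : α.Pairwise (· ≤ ·) := chain_le_of_compat h3
    rw [Set.Finite.mem_toFinset]
    refine ⟨cntL_length k α, ?_⟩
    apply refines_of flat_pos (strongDes_pos ρ')
    · rw [flat_sum, cntL_sum k α hpos hle, hlen, strongDes_sum]
    · intro t ht
      rw [PSums_flat]
      have htle : t ≤ ρ'.length := by
        have := PSums_le ht
        rwa [strongDes_sum] at this
      rcases Nat.eq_zero_or_pos t with rfl | ht0
      · exact zero_mem_PSums _
      rcases Nat.eq_or_lt_of_le htle with rfl | htlt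
      · have : (cntL k α).sum = α.length := cntL_sum k α hpos hle
        rw [hlen] at this
        exact this ▸ sum_mem_PSums _
      · have hasc := (mem_PSums_strongDes hch ht0 htlt).mp ht
        have hasc2 : α.getD (t-1) 0 < α.getD t 0 := by
          have e1 : t - 1 + 1 = t := by omega
          have h4' := h4 (t-1) (by omega)
          rw [e1] at h4'
          apply h4'
          rw [getD_rev_map (by omega), getD_rev_map (by omega)]
          omega
        have := (mem_PSums_cntL hsort hpos hle ht0 (by omega)).mpr hasc2
        exact this
  · -- membership backward
    intro b hb
    rw [Set.Finite.mem_toFinset] at hb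
    obtain ⟨hblen, href⟩ := hb
    have hsum : b.sum = ρ'.length := by
      rw [← flat_sum, refines_sum href, strongDes_sum]
    have hαlen : (repL k b).length = ρ'.length := by rw [repL_length hblen, hsum]
    have hle : ∀ x ∈ repL k b, x ≤ k := fun x hx => (repL_mem hx).2
    have hpos : ∀ x ∈ repL k b, 1 ≤ x := fun x hx => (repL_mem hx).1
    have hsort := repL_sorted k b
    rw [Finset.mem_filter, Set.Finite.mem_toFinset]
    refine ⟨⟨?_, ?_, ?_, ?_, ?_⟩, hle⟩
    · rw [hαlen, List.length_map]
    · intro j hj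
      rw [List.getD_eq_getElem _ _ hj]
      exact hpos _ (List.getElem_mem _)
    · intro j hj
      rw [List.getD_eq_getElem _ _ (by omega), List.getD_eq_getElem _ _ hj]
      exact sorted_getElem_le hsort (by omega) hj
    · intro j hj hrev
      have hjρ : j + 1 < ρ'.length := by rwa [hαlen] at hj
      rw [getD_rev_map (by omega), getD_rev_map (by omega)] at hrev
      have hasc : ρ'.reverse.getD j 0 < ρ'.reverse.getD (j+1) 0 := by omega
      have hmem : (j+1) ∈ PSums (strongDes ρ') := by
        apply (mem_PSums_strongDes hch (by omega) (by omega)).mpr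
        have e1 : j + 1 - 1 = j := by omega
        rw [e1]
        exact hasc
      have hmem2 : (j+1) ∈ PSums (cntL k (repL k b)) := by
        rw [cntL_repL hblen, ← PSums_flat]
        exact refines_PSums href hmem
      have := (mem_PSums_cntL hsort hpos hle (by omega) (by omega)).mp hmem2
      have e1 : j + 1 - 1 = j := by omega
      rwa [e1] at this
    · intro j hj
      have hjρ : j < ρ'.length := by rwa [hαlen] at hj
      rw [getD_rev_map hjρ]
      have hx : (repL k b).getD j 0 ≤ k := by
        rw [List.getD_eq_getElem _ _ hj]
        exact hle _ (List.getElem_mem _)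
      have hr : 1 ≤ ρ'.reverse.getD j 0 := by
        rw [List.getD_eq_getElem _ _ (by simpa using hjρ)]
        apply h1
        rw [← List.mem_reverse]
        exact List.getElem_mem _
      omega
  · -- left inverse
    intro α hα
    rw [Finset.mem_filter, Set.Finite.mem_toFinset] at hα
    obtain ⟨hcomp, hle⟩ := hα
    obtain ⟨hlen0, h2, h3, h4, h5⟩ := hcomp
    have hpos : ∀ x ∈ α, 1 ≤ x := by
      intro x hx
      obtain ⟨j, hj, rfl⟩ := List.mem_iff_getElem.mp hx
      have := h2 j hj
      rwa [List.getD_eq_getElem _ _ hj] at this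
    exact repL_cntL (chain_le_of_compat h3) hpos hle
  · -- right inverse
    intro b hb
    rw [Set.Finite.mem_toFinset] at hb
    exact cntL_repL hb.1
  · -- values
    intro α hα
    rw [Finset.mem_filter, Set.Finite.mem_toFinset] at hα
    obtain ⟨hcomp, hle⟩ := hα
    obtain ⟨hlen0, h2, h3, h4, h5⟩ := hcomp
    have hpos : ∀ x ∈ α, 1 ≤ x := by
      intro x hx
      obtain ⟨j, hj, rfl⟩ := List.mem_iff_getElem.mp hx
      have := h2 j hj
      rwa [List.getD_eq_getElem _ _ hj] at this
    have hsort := chain_le_of_compat h3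
    rw [trunc_prod_eq_self hle]
    conv_lhs => rw [← repL_cntL hsort hpos hle]
    exact repL_map_X_prod (cntL_length k α)

/-- For any permutation `w` and integers `n ≥ k ≥ 1`, the Schubert
polynomial of `1^n × w` (the permutation `W` with `W_i = i` for `i ≤ n` and
`W_i = n + w_{i−n}` for `i > n`) with the variables `x_{k+1}, x_{k+2}, …` set to `0`
equals the Stanley symmetric polynomial `S_w(x_1, …, x_k)`. -/
theorem schubert_shift_trunc_eq_stanley (w : Equiv.Perm ℕ) (hw : IsPermOfPos w)
    (n k : ℕ) (hk : 1 ≤ k) (hkn : k ≤ n)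
    (W : Equiv.Perm ℕ)
    (hW1 : ∀ i, i ≤ n → W i = i)
    (hW2 : ∀ i, n < i → W i = n + w (i - n)) :
    truncVars k (SchubertPoly W) = StanleyPoly k w := by
  classical
  obtain ⟨hw0, N, hN⟩ := hw
  have hW0 : W 0 = 0 := hW1 0 (by omega)
  have hWfix : ∀ m, n + N < m → W m = m := by
    intro m hm
    rw [hW2 m (by omega), hN (m - n) (by omega)]
    omega
  have hRWfin : {ρ : List ℕ | IsReducedWord W ρ}.Finite := reduced_words_finite hW0 hWfix
  have hRwfin : {ρ : List ℕ | IsReducedWord w ρ}.Finite := reduced_words_finite hw0 hN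
  rw [SchubertPoly, finsum_mem_eq_finite_toFinset_sum _ hRWfin, map_sum,
    StanleyPoly, finsum_mem_eq_finite_toFinset_sum _ hRwfin]
  apply Finset.sum_nbij' (fun ρ => ρ.map (· - n)) (fun ρ' => ρ'.map (· + n))
  · intro ρ hρ
    rw [Set.Finite.mem_toFinset] at hρ ⊢
    exact (corr_fwd hw0 hW1 hW2 hρ).2.1
  · intro ρ' hρ'
    rw [Set.Finite.mem_toFinset] at hρ' ⊢
    exact corr_bwd hw0 hW1 hW2 hρ'
  · intro ρ hρ
    rw [Set.Finite.mem_toFinset] at hρ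
    exact ((corr_fwd hw0 hW1 hW2 hρ).2.2).symm
  · intro ρ' hρ'
    rw [List.map_map]
    conv_rhs => rw [← List.map_id ρ']
    apply List.map_congr_left
    intro i _
    simp
  · intro ρ hρ
    rw [Set.Finite.mem_toFinset] at hρ
    obtain ⟨hhigh, hred', hmapeq⟩ := corr_fwd hw0 hW1 hW2 hρ
    have hch : List.Chain' (· ≠ ·) (ρ.map (· - n)) := by
      apply reduced_chain_ne
      exact (isReduced_ncard hw0 hred').1
    conv_lhs => rw [hmapeq]
    exact partD hk hkn hred'.1 hch
end

section
/- Let v be a permutation with no descent at any position ≥ k+1, i.e., v_{k+1} < v_{k+2} < ⋯. Then there is exactly one integer b > k such that ℓ(v(k,b)) = ℓ(v) + 1, namely the smallest b > k with v_b > v_k. -/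
open Equiv MvPolynomial

section SwapLenAux

/-- The inversion set of a permutation. -/
def InvSet (w : Equiv.Perm ℕ) : Set (ℕ × ℕ) :=
  {p | 1 ≤ p.1 ∧ p.1 < p.2 ∧ w p.2 < w p.1}

lemma permLen_eq_ncard_s11 (w : Equiv.Perm ℕ) : permLen w = (InvSet w).ncard := rfl

lemma invSet_finite_s11 {w : Equiv.Perm ℕ} {N : ℕ} (h : ∀ i, N < i → w i = i) :
    (InvSet w).Finite := by
  apply Set.Finite.subset ((Set.finite_Iic N).prod (Set.finite_Iic N))
  rintro ⟨i, j⟩ ⟨-, hij, hw⟩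
  replace hij : i < j := hij
  replace hw : w j < w i := hw
  have hj : j ≤ N := by
    by_contra hj
    push_neg at hj
    have hwj : w j = j := h j hj
    rcases le_or_gt i N with hi | hi
    · have hwi : w i ≤ N := by
        by_contra h'
        push_neg at h'
        have h2 := h _ h'
        have h3 := w.injective h2
        omega
      omega
    · have := h i hi
      omega
  exact ⟨Set.mem_Iic.2 (by omega), Set.mem_Iic.2 hj⟩

/-- The first auxiliary involution. -/
def phiSwap (k b : ℕ) (p : ℕ × ℕ) : ℕ × ℕ :=
  (p.1, if p.1 < k then Equiv.swap k b p.2 else p.2)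

lemma phiSwap_phiSwap (k b : ℕ) (p : ℕ × ℕ) : phiSwap k b (phiSwap k b p) = p := by
  simp only [phiSwap]
  split_ifs <;> simp

lemma phiSwap_injective (k b : ℕ) : Function.Injective (phiSwap k b) :=
  Function.LeftInverse.injective (phiSwap_phiSwap k b)

/-- The second auxiliary involution. -/
def chiSwap (k b : ℕ) (p : ℕ × ℕ) : ℕ × ℕ :=
  (if b < p.2 then Equiv.swap k b p.1 else p.1, p.2)

lemma chiSwap_chiSwap (k b : ℕ) (p : ℕ × ℕ) : chiSwap k b (chiSwap k b p) = p := by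
  simp only [chiSwap]
  split_ifs <;> simp_all

lemma chiSwap_injective (k b : ℕ) : Function.Injective (chiSwap k b) :=
  Function.LeftInverse.injective (chiSwap_chiSwap k b)

end SwapLenAux

section SwapLenKey

lemma key_eq (v : Equiv.Perm ℕ) (k b : ℕ) (hk : 1 ≤ k) (hkb : k < b)
    (hvkb : v k < v b)
    (hmid : ∀ c, k < c → c < b → v c < v k)
    (hhigh : ∀ c, b < c → v b < v c) :
    InvSet (v * Equiv.swap k b) = insert (k, b) (phiSwap k b '' InvSet v) := by
  have hswk : Equiv.swap k b k = b := Equiv.swap_apply_left k b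
  have hswb : Equiv.swap k b b = k := Equiv.swap_apply_right k b
  have hsw : ∀ m, m ≠ k → m ≠ b → Equiv.swap k b m = m := fun m h1 h2 =>
    Equiv.swap_apply_of_ne_of_ne h1 h2
  have hA : ∀ p ∈ InvSet v, phiSwap k b p ∈ InvSet (v * Equiv.swap k b) := by
    rintro ⟨i, j⟩ ⟨h1, h2, h3⟩
    replace h1 : 1 ≤ i := h1
    replace h2 : i < j := h2
    replace h3 : v j < v i := h3
    simp only [InvSet, Set.mem_setOf_eq, phiSwap, Equiv.Perm.mul_apply]
    by_cases hik : i < k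
    · rw [if_pos hik, Equiv.swap_apply_self, hsw i (by omega) (by omega)]
      refine ⟨h1, ?_, h3⟩
      rcases eq_or_ne j k with rfl | hjk
      · rw [hswk]; omega
      · rcases eq_or_ne j b with rfl | hjb
        · rw [hswb]; omega
        · rw [hsw j hjk hjb]; omega
    · rw [if_neg hik]
      refine ⟨h1, h2, ?_⟩
      rcases eq_or_ne i k with rfl | hik'
      · -- i = k
        rw [hswk]
        rcases eq_or_ne j b with rfl | hjb
        · omega
        · rw [hsw j (by omega) hjb]
          exact h3.trans hvkb
      · have hik2 : k < i := by omega
        rcases eq_or_ne j b with rfl | hjb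
        · exfalso
          have := hmid i hik2 h2
          omega
        · rcases eq_or_ne i b with rfl | hib
          · exfalso
            have := hhigh j (by omega)
            omega
          · rw [hsw i hik' hib, hsw j (by omega) hjb]
            exact h3
  have hB : ∀ p ∈ InvSet (v * Equiv.swap k b), p ≠ (k, b) → phiSwap k b p ∈ InvSet v := by
    rintro ⟨i, j⟩ ⟨h1, h2, h3⟩ hne
    replace h1 : 1 ≤ i := h1
    replace h2 : i < j := h2
    replace h3 : v (Equiv.swap k b j) < v (Equiv.swap k b i) := h3
    simp only [InvSet, Set.mem_setOf_eq, phiSwap, Equiv.Perm.mul_apply]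
    by_cases hik : i < k
    · rw [if_pos hik]
      rw [hsw i (by omega) (by omega)] at h3
      refine ⟨h1, ?_, h3⟩
      rcases eq_or_ne j k with rfl | hjk
      · rw [hswk]; omega
      · rcases eq_or_ne j b with rfl | hjb
        · rw [hswb]; omega
        · rw [hsw j hjk hjb]; omega
    · rw [if_neg hik]
      refine ⟨h1, h2, ?_⟩
      rcases eq_or_ne i k with rfl | hik'
      · rw [hswk] at h3
        have hjb : j ≠ b := fun h => hne (by rw [h])
        rw [hsw j (by omega) hjb] at h3
        rcases lt_or_ge j b with hjb' | hjb'
        · exact hmid j (by omega) hjb'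
        · exfalso
          have := hhigh j (by omega)
          omega
      · have hik2 : k < i := by omega
        rcases eq_or_ne j b with rfl | hjb
        · exfalso
          rw [hswb, hsw i hik' (by omega)] at h3
          have := hmid i hik2 h2
          omega
        · rcases eq_or_ne i b with rfl | hib
          · exfalso
            rw [hswb, hsw j (by omega) hjb] at h3
            have := hhigh j (by omega)
            omega
          · rw [hsw i hik' hib, hsw j (by omega) hjb] at h3
            exact h3
  ext p
  constructor
  · intro hp
    rcases eq_or_ne p (k, b) with rfl | hne
    · exact Set.mem_insert _ _
    · exact Set.mem_insert_of_mem _ ⟨phiSwap k b p, hB p hp hne, phiSwap_phiSwap k b p⟩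
  · intro hp
    rcases Set.mem_insert_iff.1 hp with rfl | hp1
    · exact ⟨hk, hkb, by
        simp only [Equiv.Perm.mul_apply, hswk, hswb]; exact hvkb⟩
    · obtain ⟨q, hq, rfl⟩ := hp1
      exact hA q hq

lemma key_lt (v : Equiv.Perm ℕ) (k b' : ℕ) (hk : 1 ≤ k) (hkb' : k < b')
    (hvb'k : v b' < v k)
    (hmono : ∀ i j, k + 1 ≤ i → i < j → v i < v j) :
    Set.MapsTo (fun p => chiSwap k b' (phiSwap k b' p))
      (insert (k, b') (InvSet (v * Equiv.swap k b'))) (InvSet v) := by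
  have hswk : Equiv.swap k b' k = b' := Equiv.swap_apply_left k b'
  have hswb : Equiv.swap k b' b' = k := Equiv.swap_apply_right k b'
  have hsw : ∀ m, m ≠ k → m ≠ b' → Equiv.swap k b' m = m := fun m h1 h2 =>
    Equiv.swap_apply_of_ne_of_ne h1 h2
  intro p hp0
  rcases Set.mem_insert_iff.1 hp0 with rfl | hp
  · simp only [phiSwap, chiSwap, if_neg (lt_irrefl k), if_neg (lt_irrefl b')]
    exact ⟨hk, hkb', hvb'k⟩
  · obtain ⟨i, j⟩ := p
    obtain ⟨h1, h2, h3⟩ := hp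
    replace h1 : 1 ≤ i := h1
    replace h2 : i < j := h2
    replace h3 : v (Equiv.swap k b' j) < v (Equiv.swap k b' i) := h3
    simp only [InvSet, Set.mem_setOf_eq, phiSwap, chiSwap]
    by_cases hik : i < k
    · rw [if_pos hik]
      rw [hsw i (by omega) (by omega)] at h3
      simp only [hsw i (by omega) (by omega), ite_self]
      refine ⟨h1, ?_, h3⟩
      rcases eq_or_ne j k with rfl | hjk
      · rw [hswk]; omega
      · rcases eq_or_ne j b' with rfl | hjb
        · rw [hswb]; omega
        · rw [hsw j hjk hjb]; omega
    · rw [if_neg hik]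
      by_cases hbj : b' < j
      · rw [if_pos hbj]
        have hjk : j ≠ k := by omega
        have hjb : j ≠ b' := by omega
        rw [hsw j hjk hjb] at h3
        rcases eq_or_ne i k with rfl | hik'
        · rw [hswk] at h3 ⊢
          exact ⟨by omega, hbj, h3⟩
        · rcases eq_or_ne i b' with rfl | hib
          · rw [hswb] at h3 ⊢
            exact ⟨hk, by omega, h3⟩
          · rw [hsw i hik' hib] at h3 ⊢
            exact ⟨h1, h2, h3⟩
      · rw [if_neg hbj]
        rcases eq_or_ne j b' with rfl | hjb
        · rcases eq_or_ne i k with rfl | hik'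
          · rw [hswb, hswk] at h3; omega
          · exfalso
            rw [hswb, hsw i hik' (by omega)] at h3
            have := hmono i j (by omega) h2
            omega
        · have hjk : j ≠ k := by omega
          rw [hsw j hjk hjb] at h3
          rcases eq_or_ne i k with rfl | hik'
          · rw [hswk] at h3
            exact ⟨h1, h2, by omega⟩
          · have hib : i ≠ b' := by omega
            rw [hsw i hik' hib] at h3
            exact ⟨h1, h2, h3⟩

lemma key_gt (v : Equiv.Perm ℕ) (k b b' : ℕ) (hk : 1 ≤ k) (hkb : k < b)
    (hbb' : b < b') (hvkb : v k < v b)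
    (hmid : ∀ c, k < c → c < b → v c < v k)
    (hmono : ∀ i j, k + 1 ≤ i → i < j → v i < v j) :
    Set.MapsTo (phiSwap k b')
      (insert (k, b) (insert (b, b') (InvSet v))) (InvSet (v * Equiv.swap k b')) := by
  have hswk : Equiv.swap k b' k = b' := Equiv.swap_apply_left k b'
  have hswb : Equiv.swap k b' b' = k := Equiv.swap_apply_right k b'
  have hsw : ∀ m, m ≠ k → m ≠ b' → Equiv.swap k b' m = m := fun m h1 h2 =>
    Equiv.swap_apply_of_ne_of_ne h1 h2
  have hvbb' : v b < v b' := hmono b b' (by omega) hbb'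
  intro p hp0
  rcases Set.mem_insert_iff.1 hp0 with rfl | hp1
  · simp only [phiSwap, if_neg (lt_irrefl k)]
    refine ⟨hk, hkb, ?_⟩
    simp only [Equiv.Perm.mul_apply, hswk, hsw b (by omega) (by omega)]
    exact hvbb'
  rcases Set.mem_insert_iff.1 hp1 with rfl | hp
  · simp only [phiSwap, if_neg (by omega : ¬ b < k)]
    refine ⟨by omega, hbb', ?_⟩
    simp only [Equiv.Perm.mul_apply, hswb, hsw b (by omega) (by omega)]
    exact hvkb
  · obtain ⟨i, j⟩ := p
    obtain ⟨h1, h2, h3⟩ := hp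
    replace h1 : 1 ≤ i := h1
    replace h2 : i < j := h2
    replace h3 : v j < v i := h3
    simp only [InvSet, Set.mem_setOf_eq, phiSwap, Equiv.Perm.mul_apply]
    by_cases hik : i < k
    · rw [if_pos hik, Equiv.swap_apply_self, hsw i (by omega) (by omega)]
      refine ⟨h1, ?_, h3⟩
      rcases eq_or_ne j k with rfl | hjk
      · rw [hswk]; omega
      · rcases eq_or_ne j b' with rfl | hjb
        · rw [hswb]; omega
        · rw [hsw j hjk hjb]; omega
    · rw [if_neg hik]
      refine ⟨h1, h2, ?_⟩
      rcases eq_or_ne i k with rfl | hik'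
      · rw [hswk]
        rcases eq_or_ne j b' with rfl | hjb
        · exfalso
          omega
        · rw [hsw j (by omega) hjb]
          omega
      · rcases eq_or_ne j b' with rfl | hjb
        · exfalso
          have := hmono i j (by omega) h2
          omega
        · rcases eq_or_ne i b' with rfl | hib
          · exfalso
            have := hmono i j (by omega) h2
            omega
          · rw [hsw i hik' hib, hsw j (by omega) hjb]
            exact h3

end SwapLenKey
/-- Let `v` be a permutation with no descent at any position
`≥ k + 1`, i.e. `v_{k+1} < v_{k+2} < ⋯`.  Then there is exactly one integer `b > k`
such that `ℓ(v(k,b)) = ℓ(v) + 1`, namely the smallest `b > k` with `v_b > v_k`. -/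
theorem unique_length_increasing_swap (v : Equiv.Perm ℕ) (hv : IsPermOfPos v)
    (k : ℕ) (hk : 1 ≤ k)
    (hinc : ∀ i, k + 1 ≤ i → v i < v (i + 1)) :
    ∃ b : ℕ, k < b ∧ v k < v b ∧ (∀ c, k < c → v k < v c → b ≤ c) ∧
      permLen (v * Equiv.swap k b) = permLen v + 1 ∧
      ∀ b', k < b' → permLen (v * Equiv.swap k b') = permLen v + 1 → b' = b := by
  obtain ⟨-, N, hN⟩ := hv
  have hmono : ∀ i j : ℕ, k + 1 ≤ i → i < j → v i < v j := by
    intro i j hi hij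
    induction j with
    | zero => omega
    | succ n ih =>
      rcases Nat.lt_or_ge i n with h | h
      · exact (ih h).trans (hinc n (by omega))
      · have hin : i = n := by omega
        subst hin
        exact hinc i hi
  have hex : ∃ b, k < b ∧ v k < v b := by
    have h9 : v (N + k + v k + 1) = N + k + v k + 1 := hN _ (by omega)
    exact ⟨N + k + v k + 1, by omega, by rw [h9]; omega⟩
  set b := Nat.find hex with hb
  obtain ⟨hkb, hvkb⟩ : k < b ∧ v k < v b := Nat.find_spec hex
  have hmin : ∀ c, k < c → v k < v c → b ≤ c := fun c h1 h2 =>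
    Nat.find_min' hex ⟨h1, h2⟩
  have hmid : ∀ c, k < c → c < b → v c < v k := by
    intro c h1 h2
    have h3 := Nat.find_min hex h2
    push_neg at h3
    have h4 : v c ≤ v k := by
      by_contra h5
      exact absurd (h3 h1) (by omega)
    rcases eq_or_lt_of_le h4 with h5 | h5
    · exact absurd (v.injective h5) (by omega)
    · exact h5
  have hhigh : ∀ c, b < c → v b < v c := fun c hc => hmono b c (by omega) hc
  -- finiteness
  have hfinv : (InvSet v).Finite := invSet_finite_s11 hN
  have hfinu : ∀ c, (InvSet (v * Equiv.swap k c)).Finite := by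
    intro c
    apply invSet_finite_s11 (N := N + k + c)
    intro i hi
    rw [Equiv.Perm.mul_apply, Equiv.swap_apply_of_ne_of_ne (by omega) (by omega),
      hN i (by omega)]
  -- length goes up by one at b
  have hlen : permLen (v * Equiv.swap k b) = permLen v + 1 := by
    rw [permLen_eq_ncard_s11, permLen_eq_ncard_s11,
      key_eq v k b hk hkb hvkb hmid hhigh,
      Set.ncard_insert_of_notMem ?_ ((hfinv.image _)),
      Set.ncard_image_of_injective _ (phiSwap_injective k b)]
    · rintro ⟨q, hq, hq2⟩
      have : q = (k, b) := by
        have := congrArg (phiSwap k b) hq2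
        rwa [phiSwap_phiSwap, phiSwap, if_neg (lt_irrefl k)] at this
      subst this
      have h9 : v b < v k := hq.2.2
      omega
  refine ⟨b, hkb, hvkb, hmin, hlen, ?_⟩
  intro b' hkb' hlen'
  by_contra hne
  rcases lt_trichotomy (v b') (v k) with hvb | hvb | hvb
  · -- v b' < v k : length goes down
    have hmt := key_lt v k b' hk hkb' hvb hmono
    have hinj : Set.InjOn (fun p => chiSwap k b' (phiSwap k b' p))
        (insert (k, b') (InvSet (v * Equiv.swap k b'))) :=
      (((chiSwap_injective k b').comp (phiSwap_injective k b')).injOn)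
    have hcard := Set.ncard_le_ncard_of_injOn _ hmt hinj hfinv
    rw [Set.ncard_insert_of_notMem ?_ (hfinu b')] at hcard
    · rw [permLen_eq_ncard_s11, permLen_eq_ncard_s11] at hlen'
      omega
    · intro hmem
      have h3 : v (Equiv.swap k b' b') < v (Equiv.swap k b' k) := hmem.2.2
      rw [Equiv.swap_apply_left, Equiv.swap_apply_right] at h3
      omega
  · exact absurd (v.injective hvb) (by omega)
  · -- v k < v b' : then b < b' and length goes up by at least two
    have hbb' : b < b' := by
      have := hmin b' hkb' hvb
      omega
    have hmt := key_gt v k b b' hk hkb hbb' hvkb hmid hmono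
    have hcard := Set.ncard_le_ncard_of_injOn _ hmt
      ((phiSwap_injective k b').injOn) (hfinu b')
    have hne1 : (k, b) ∉ insert (b, b') (InvSet v) := by
      intro hmem
      rcases Set.mem_insert_iff.1 hmem with heq | hmem
      · have : k = b := congrArg Prod.fst heq
        omega
      · have h9 : v b < v k := hmem.2.2
        omega
    have hne2 : (b, b') ∉ InvSet v := by
      intro hmem
      have h8 := hmono b b' (by omega) hbb'
      have h9 : v b' < v b := hmem.2.2
      omega
    rw [Set.ncard_insert_of_notMem hne1 ((hfinv.insert _)),
      Set.ncard_insert_of_notMem hne2 hfinv] at hcard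
    rw [permLen_eq_ncard_s11, permLen_eq_ncard_s11] at hlen'
    omega
end
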